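/- Let $X_i = AS_i + H_i$ for $i \in \{k, l\}$ with $A$ invertible, $S_i$ independent of $H_i$, and suppose $\operatorname{Cov}(H_k) = \operatorname{Cov}(H_l)$ (stationary confounding within the group). If additionally $\operatorname{Cov}(S_k)$ and $\operatorname{Cov}(S_l)$ are diagonal matrices, then with $V = A^{-1}$ the matrix $V(\operatorname{Cov}(X_k) - \operatorname{Cov}(X_l))V^\top = \operatorname{Cov}(S_k) - \operatorname{Cov}(S_l)$ is diagonal. -/

import Mathlib

open Matrix MeasureTheory ProbabilityTheory

/-- Covariance matrix `Cov(X, Y)` of two `ℝ^d`-valued random vectors. -/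
noncomputable def covMat {Ω : Type*} [MeasurableSpace Ω] (μ : Measure Ω) {d : ℕ}
    (X Y : Ω → Fin d → ℝ) : Matrix (Fin d) (Fin d) ℝ :=
  Matrix.of fun i j =>
    ∫ ω, (X ω i - ∫ ω', X ω' i ∂μ) * (Y ω j - ∫ ω', Y ω' j ∂μ) ∂μ

lemma l2_mul_integrable {Ω : Type*} [MeasurableSpace Ω] {μ : Measure Ω}
    {f g : Ω → ℝ} (hf : MemLp f 2 μ) (hg : MemLp g 2 μ) :
    Integrable (fun ω => f ω * g ω) μ := by
  have : ENNReal.HolderTriple 2 2 1 := ⟨by simpa using ENNReal.inv_two_add_inv_two⟩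
  have h := hg.smul (φ := f) hf (r := 1)
  rw [← memLp_one_iff_integrable]
  exact h

lemma cov_mix {Ω : Type*} [MeasurableSpace Ω] (μ : Measure Ω) [IsProbabilityMeasure μ]
    {d : ℕ} (S H : Ω → Fin d → ℝ)
    (hSmeas : Measurable S) (hHmeas : Measurable H)
    (hS2 : ∀ i, MemLp (fun ω => S ω i) 2 μ)
    (hH2 : ∀ i, MemLp (fun ω => H ω i) 2 μ)
    (hindep : IndepFun S H μ)
    (A : Matrix (Fin d) (Fin d) ℝ) :
    covMat μ (fun ω => A.mulVec (S ω) + H ω) (fun ω => A.mulVec (S ω) + H ω)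
      = A * covMat μ S S * Aᵀ + covMat μ H H := by
  set X : Ω → Fin d → ℝ := fun ω => A.mulVec (S ω) + H ω with hX
  have hSint : ∀ k, Integrable (fun ω => S ω k) μ := fun k => (hS2 k).integrable one_le_two
  have hHint : ∀ k, Integrable (fun ω => H ω k) μ := fun k => (hH2 k).integrable one_le_two
  set cS : Fin d → Ω → ℝ := fun k ω => S ω k - ∫ ω', S ω' k ∂μ with hcS
  set cH : Fin d → Ω → ℝ := fun k ω => H ω k - ∫ ω', H ω' k ∂μ with hcH
  have hcS2 : ∀ k, MemLp (cS k) 2 μ := fun k => (hS2 k).sub (memLp_const _)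
  have hcH2 : ∀ k, MemLp (cH k) 2 μ := fun k => (hH2 k).sub (memLp_const _)
  have hcSint : ∀ k, Integrable (cS k) μ := fun k => (hcS2 k).integrable one_le_two
  have hcHint : ∀ k, Integrable (cH k) μ := fun k => (hcH2 k).integrable one_le_two
  have hcSmean : ∀ k, ∫ ω, cS k ω ∂μ = 0 := by
    intro k
    rw [hcS, integral_sub (hSint k) (integrable_const _)]
    simp
  have hcHmean : ∀ k, ∫ ω, cH k ω ∂μ = 0 := by
    intro k
    rw [hcH, integral_sub (hHint k) (integrable_const _)]
    simp
  have hcross : ∀ k j, ∫ ω, cS k ω * cH j ω ∂μ = 0 := by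
    intro k j
    have h1 : IndepFun (cS k) (cH j) μ := by
      have := hindep.comp (measurable_pi_apply k) (measurable_pi_apply j)
      exact this.comp (measurable_id.sub measurable_const) (measurable_id.sub measurable_const)
    have h2 := h1.integral_mul_eq_mul_integral (hcSint k).aestronglyMeasurable (hcHint j).aestronglyMeasurable
    rw [show (fun ω => cS k ω * cH j ω) = cS k * cH j from rfl, h2, hcSmean, hcHmean, mul_zero]
  have hmean : ∀ i, (∫ ω, X ω i ∂μ) = (∑ k, A i k * ∫ ω, S ω k ∂μ) + ∫ ω, H ω i ∂μ := by
    intro i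
    have h1 : Integrable (fun ω => ∑ k, A i k * S ω k) μ :=
      integrable_finset_sum _ fun k _ => (hSint k).const_mul _
    simp only [hX, Pi.add_apply, Matrix.mulVec, dotProduct]
    rw [integral_add h1 (hHint i), integral_finset_sum _ fun k _ => (hSint k).const_mul _]
    simp [integral_const_mul]
  have hcenter : ∀ i ω, X ω i - ∫ ω', X ω' i ∂μ
      = (∑ k, A i k * cS k ω) + cH i ω := by
    intro i ω
    rw [hmean]
    simp only [hX, Pi.add_apply, Matrix.mulVec, dotProduct, hcS, hcH, mul_sub,
      Finset.sum_sub_distrib]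
    ring
  have hcovS : ∀ k l, covMat μ S S k l = ∫ ω, cS k ω * cS l ω ∂μ := fun k l => rfl
  have hcovH : ∀ k l, covMat μ H H k l = ∫ ω, cH k ω * cH l ω ∂μ := fun k l => rfl
  ext i j
  show (∫ ω, (X ω i - ∫ ω', X ω' i ∂μ) * (X ω j - ∫ ω', X ω' j ∂μ) ∂μ) = _
  have key : (fun ω => (X ω i - ∫ ω', X ω' i ∂μ) * (X ω j - ∫ ω', X ω' j ∂μ))
      = fun ω => (∑ k, ∑ l, (A i k * A j l) * (cS k ω * cS l ω))
        + (∑ k, (A i k) * (cS k ω * cH j ω))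
        + (∑ l, (A j l) * (cH i ω * cS l ω))
        + cH i ω * cH j ω := by
    funext ω
    have t1 : (∑ k, ∑ l, (A i k * A j l) * (cS k ω * cS l ω))
        = (∑ k, A i k * cS k ω) * (∑ l, A j l * cS l ω) := by
      rw [Finset.sum_mul_sum]
      exact Finset.sum_congr rfl fun k _ => Finset.sum_congr rfl fun l _ => by ring
    have t2 : (∑ k, (A i k) * (cS k ω * cH j ω)) = (∑ k, A i k * cS k ω) * cH j ω := by
      rw [Finset.sum_mul]
      exact Finset.sum_congr rfl fun k _ => by ring
    have t3 : (∑ l, (A j l) * (cH i ω * cS l ω)) = cH i ω * (∑ l, A j l * cS l ω) := by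
      rw [Finset.mul_sum]
      exact Finset.sum_congr rfl fun l _ => by ring
    rw [hcenter i ω, hcenter j ω, t1, t2, t3]
    ring
  rw [key]
  have int1 : Integrable (fun ω => ∑ k, ∑ l, (A i k * A j l) * (cS k ω * cS l ω)) μ :=
    integrable_finset_sum _ fun k _ => integrable_finset_sum _ fun l _ =>
      (l2_mul_integrable (hcS2 k) (hcS2 l)).const_mul _
  have int2 : Integrable (fun ω => ∑ k, (A i k) * (cS k ω * cH j ω)) μ :=
    integrable_finset_sum _ fun k _ => (l2_mul_integrable (hcS2 k) (hcH2 j)).const_mul _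
  have int3 : Integrable (fun ω => ∑ l, (A j l) * (cH i ω * cS l ω)) μ :=
    integrable_finset_sum _ fun l _ => (l2_mul_integrable (hcH2 i) (hcS2 l)).const_mul _
  have int4 : Integrable (fun ω => cH i ω * cH j ω) μ := l2_mul_integrable (hcH2 i) (hcH2 j)
  have int12 : Integrable (fun ω => (∑ k, ∑ l, (A i k * A j l) * (cS k ω * cS l ω))
      + (∑ k, (A i k) * (cS k ω * cH j ω))) μ := int1.add int2
  have int123 : Integrable (fun ω => (∑ k, ∑ l, (A i k * A j l) * (cS k ω * cS l ω))
      + (∑ k, (A i k) * (cS k ω * cH j ω))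
      + (∑ l, (A j l) * (cH i ω * cS l ω))) μ := int12.add int3
  rw [integral_add int123 int4, integral_add int12 int3, integral_add int1 int2,
    integral_finset_sum _ fun k _ => (integrable_finset_sum _ fun l _ =>
      (l2_mul_integrable (hcS2 k) (hcS2 l)).const_mul _),
    integral_finset_sum _ fun k _ => (l2_mul_integrable (hcS2 k) (hcH2 j)).const_mul _,
    integral_finset_sum _ fun l _ => (l2_mul_integrable (hcH2 i) (hcS2 l)).const_mul _]
  have e2 : ∀ k ∈ Finset.univ, (∫ ω, A i k * (cS k ω * cH j ω) ∂μ) = (0 : ℝ) := by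
    intro k _; rw [integral_const_mul, hcross, mul_zero]
  have e3 : ∀ l ∈ Finset.univ, (∫ ω, A j l * (cH i ω * cS l ω) ∂μ) = (0 : ℝ) := by
    intro l _
    rw [integral_const_mul]
    have h0 : ∫ ω, cH i ω * cS l ω ∂μ = 0 := by
      rw [← hcross l i]; congr 1; funext ω; ring
    rw [h0, mul_zero]
  rw [Finset.sum_eq_zero e2, Finset.sum_eq_zero e3, add_zero, add_zero]
  have lhs1 : (∑ k, ∫ ω, ∑ l, (A i k * A j l) * (cS k ω * cS l ω) ∂μ)
      = (A * covMat μ S S * Aᵀ) i j := by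
    have step : ∀ k, (∫ ω, ∑ l, (A i k * A j l) * (cS k ω * cS l ω) ∂μ)
        = ∑ l, (A i k * A j l) * ∫ ω, cS k ω * cS l ω ∂μ := by
      intro k
      rw [integral_finset_sum _ fun l _ => (l2_mul_integrable (hcS2 k) (hcS2 l)).const_mul _]
      exact Finset.sum_congr rfl fun l _ => integral_const_mul _ _
    simp only [step, Matrix.mul_apply, Matrix.transpose_apply]
    rw [Finset.sum_comm]
    refine Finset.sum_congr rfl fun l _ => ?_
    rw [Finset.sum_mul]
    refine Finset.sum_congr rfl fun k _ => ?_
    rw [hcovS]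
    ring
  rw [lhs1, ← hcovH i j, Matrix.add_apply]

/-- Within a group with stationary confounding, differences of observed covariances
are diagonalized by the true unmixing matrix `V = A⁻¹`. -/
theorem stmt3 {Ω : Type*} [MeasurableSpace Ω] (μ : Measure Ω) [IsProbabilityMeasure μ]
    {d : ℕ} (Sk Sl Hk Hl : Ω → Fin d → ℝ)
    (hSkmeas : Measurable Sk) (hSlmeas : Measurable Sl)
    (hHkmeas : Measurable Hk) (hHlmeas : Measurable Hl)
    (hSk2 : ∀ i, MemLp (fun ω => Sk ω i) 2 μ)
    (hSl2 : ∀ i, MemLp (fun ω => Sl ω i) 2 μ)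
    (hHk2 : ∀ i, MemLp (fun ω => Hk ω i) 2 μ)
    (hHl2 : ∀ i, MemLp (fun ω => Hl ω i) 2 μ)
    (hindepk : IndepFun Sk Hk μ) (hindepl : IndepFun Sl Hl μ)
    (hstat : covMat μ Hk Hk = covMat μ Hl Hl)
    (hdiagk : (covMat μ Sk Sk).IsDiag) (hdiagl : (covMat μ Sl Sl).IsDiag)
    (A : Matrix (Fin d) (Fin d) ℝ) (hA : IsUnit A)
    (Xk Xl : Ω → Fin d → ℝ)
    (hXk : ∀ ω, Xk ω = A.mulVec (Sk ω) + Hk ω)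
    (hXl : ∀ ω, Xl ω = A.mulVec (Sl ω) + Hl ω)
    (V : Matrix (Fin d) (Fin d) ℝ) (hV : V = A⁻¹) :
    V * (covMat μ Xk Xk - covMat μ Xl Xl) * Vᵀ = covMat μ Sk Sk - covMat μ Sl Sl ∧
      (V * (covMat μ Xk Xk - covMat μ Xl Xl) * Vᵀ).IsDiag := by
  have hXk' : Xk = fun ω => A.mulVec (Sk ω) + Hk ω := funext hXk
  have hXl' : Xl = fun ω => A.mulVec (Sl ω) + Hl ω := funext hXl
  have hk := cov_mix μ Sk Hk hSkmeas hHkmeas hSk2 hHk2 hindepk A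
  have hl := cov_mix μ Sl Hl hSlmeas hHlmeas hSl2 hHl2 hindepl A
  have hVA : V * A = 1 := by
    rw [hV]
    exact Matrix.nonsing_inv_mul A ((Matrix.isUnit_iff_isUnit_det A).mp hA)
  have hAV : Aᵀ * Vᵀ = 1 := by
    rw [← Matrix.transpose_mul, hVA, Matrix.transpose_one]
  have cancel : ∀ C : Matrix (Fin d) (Fin d) ℝ, V * (A * C * Aᵀ) * Vᵀ = C := by
    intro C
    have h : V * (A * C * Aᵀ) * Vᵀ = V * A * (C * (Aᵀ * Vᵀ)) := by noncomm_ring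
    rw [h, hVA, hAV, Matrix.mul_one, Matrix.one_mul]
  have hsub : covMat μ Xk Xk - covMat μ Xl Xl
      = A * (covMat μ Sk Sk - covMat μ Sl Sl) * Aᵀ := by
    rw [hXk', hXl', hk, hl, hstat]
    noncomm_ring
  have main : V * (covMat μ Xk Xk - covMat μ Xl Xl) * Vᵀ
      = covMat μ Sk Sk - covMat μ Sl Sl := by
    rw [hsub]; exact cancel _
  exact ⟨main, main ▸ hdiagk.sub hdiagl⟩
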